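/- For every coherent pair of random variables (X,Y) one has E|X-Y|² ≤ 1/4, and this bound is sharp: the supremum of E|X-Y|² over all coherent pairs (X,Y) equals 1/4. -/

import Mathlib

open MeasureTheory ProbabilityTheory

/-- A pair of random variables `(X, Y)` on a probability space is *coherent* if there are an
event `A` and sub-σ-algebras `G`, `H` such that `X = E[1_A | G]` and `Y = E[1_A | H]` a.s. -/
def IsCoherentPair {Ω : Type} [m0 : MeasurableSpace Ω] (μ : Measure Ω) (X Y : Ω → ℝ) : Prop :=
  ∃ (A : Set Ω) (G H : MeasurableSpace Ω),
    MeasurableSet A ∧ G ≤ m0 ∧ H ≤ m0 ∧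
    X =ᵐ[μ] μ[A.indicator (fun _ => (1 : ℝ)) | G] ∧
    Y =ᵐ[μ] μ[A.indicator (fun _ => (1 : ℝ)) | H]

/-- The set of values `E|X - Y|²` over all coherent pairs `(X, Y)`. -/
def coherentSqVals : Set ℝ :=
  { r : ℝ | ∃ (Ω : Type) (m0 : MeasurableSpace Ω) (μ : Measure Ω),
      IsProbabilityMeasure μ ∧ ∃ X Y : Ω → ℝ,
        IsCoherentPair μ X Y ∧ r = ∫ ω, |X ω - Y ω| ^ 2 ∂μ }

section Aux

/-- Basic facts about `g = μ[1_A | G]`. -/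
lemma coherent_aux {Ω : Type} {G : MeasurableSpace Ω} [m0 : MeasurableSpace Ω]
    (μ : Measure Ω) [IsProbabilityMeasure μ] {A : Set Ω} (hA : MeasurableSet A) (hG : G ≤ m0) :
    (0 ≤ᵐ[μ] μ[A.indicator (fun _ => (1:ℝ)) | G]) ∧
    (μ[A.indicator (fun _ => (1:ℝ)) | G] ≤ᵐ[μ] fun _ => (1:ℝ)) ∧
    (∫ ω, (μ[A.indicator (fun _ => (1:ℝ)) | G]) ω * A.indicator (fun _ => (1:ℝ)) ω ∂μ
      = ∫ ω, (μ[A.indicator (fun _ => (1:ℝ)) | G]) ω * (μ[A.indicator (fun _ => (1:ℝ)) | G]) ω ∂μ) ∧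
    (∫ ω, (μ[A.indicator (fun _ => (1:ℝ)) | G]) ω ∂μ = ∫ ω, A.indicator (fun _ => (1:ℝ)) ω ∂μ) := by
  set f : Ω → ℝ := A.indicator (fun _ => (1:ℝ)) with hf
  haveI : SigmaFinite (μ.trim hG) := (isFiniteMeasure_trim hG).toSigmaFinite
  have hf_int : Integrable f μ := (integrable_const (1:ℝ)).indicator hA
  have hf01 : ∀ ω, 0 ≤ f ω ∧ f ω ≤ 1 := by
    intro ω
    by_cases h : ω ∈ A <;> simp [hf, Set.indicator_of_mem, Set.indicator_of_notMem, h]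
  have hnn : 0 ≤ᵐ[μ] μ[f|G] :=
    condExp_nonneg (Filter.Eventually.of_forall fun ω => (hf01 ω).1)
  have hle1 : μ[f|G] ≤ᵐ[μ] fun _ => (1:ℝ) := by
    have h := condExp_mono (μ := μ) (m := G) hf_int (integrable_const (1:ℝ))
      (Filter.Eventually.of_forall fun ω => (hf01 ω).2)
    rwa [condExp_const hG (1:ℝ)] at h
  have hbd : ∀ᵐ ω ∂μ, ‖(μ[f|G]) ω‖ ≤ (1:ℝ) := by
    filter_upwards [hnn, hle1] with ω h0 h1
    rw [Real.norm_eq_abs, abs_of_nonneg h0]; exact h1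
  refine ⟨hnn, hle1, ?_, integral_condExp hG⟩
  have hpull : μ[(μ[f|G]) * f|G] =ᵐ[μ] (μ[f|G]) * μ[f|G] :=
    condExp_stronglyMeasurable_mul_of_bound hG stronglyMeasurable_condExp hf_int 1 hbd
  calc ∫ ω, (μ[f|G]) ω * f ω ∂μ = ∫ ω, (μ[f|G] * f) ω ∂μ := rfl
    _ = ∫ ω, (μ[(μ[f|G]) * f|G]) ω ∂μ := (integral_condExp hG).symm
    _ = ∫ ω, ((μ[f|G]) * μ[f|G]) ω ∂μ := integral_congr_ae hpull
    _ = ∫ ω, (μ[f|G]) ω * (μ[f|G]) ω ∂μ := rfl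

/-- Abstract core: if `f` is `{0,1}`-valued, `g, k` take values in `[0,1]`, and the four
integral identities hold, then `∫ (g - k)² ≤ 1/4`. -/
lemma quarter_core {Ω : Type} [m0 : MeasurableSpace Ω] {μ : Measure Ω} [IsProbabilityMeasure μ]
    {f g k : Ω → ℝ}
    (hf01 : ∀ᵐ ω ∂μ, f ω = 0 ∨ f ω = 1)
    (hg0 : ∀ᵐ ω ∂μ, 0 ≤ g ω) (hg1 : ∀ᵐ ω ∂μ, g ω ≤ 1)
    (hk0 : ∀ᵐ ω ∂μ, 0 ≤ k ω) (hk1 : ∀ᵐ ω ∂μ, k ω ≤ 1)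
    (hf_int : Integrable f μ) (hg_int : Integrable g μ) (hk_int : Integrable k μ)
    (hg_meas : AEStronglyMeasurable g μ) (hk_meas : AEStronglyMeasurable k μ)
    (hgf : ∫ ω, g ω * f ω ∂μ = ∫ ω, g ω * g ω ∂μ)
    (hkf : ∫ ω, k ω * f ω ∂μ = ∫ ω, k ω * k ω ∂μ)
    (hgint : ∫ ω, g ω ∂μ = ∫ ω, f ω ∂μ)
    (hkint : ∫ ω, k ω ∂μ = ∫ ω, f ω ∂μ) :
    ∫ ω, (g ω - k ω) ^ 2 ∂μ ≤ 1 / 4 := by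
  have hgbd : ∀ᵐ ω ∂μ, ‖g ω‖ ≤ (1:ℝ) := by
    filter_upwards [hg0, hg1] with ω h0 h1
    rw [Real.norm_eq_abs, abs_of_nonneg h0]; exact h1
  have hkbd : ∀ᵐ ω ∂μ, ‖k ω‖ ≤ (1:ℝ) := by
    filter_upwards [hk0, hk1] with ω h0 h1
    rw [Real.norm_eq_abs, abs_of_nonneg h0]; exact h1
  have hgg : Integrable (fun ω => g ω * g ω) μ := hg_int.bdd_mul hg_meas hgbd
  have hkk : Integrable (fun ω => k ω * k ω) μ := hk_int.bdd_mul hk_meas hkbd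
  have hgk : Integrable (fun ω => g ω * k ω) μ := hk_int.bdd_mul hg_meas hgbd
  have hfg : Integrable (fun ω => g ω * f ω) μ := hf_int.bdd_mul hg_meas hgbd
  have hfk : Integrable (fun ω => k ω * f ω) μ := hf_int.bdd_mul hk_meas hkbd
  set W : Ω → ℝ := fun ω => 2 * f ω * (g ω + k ω) - 2 * f ω + (g ω + k ω) - (g ω + k ω)^2
    with hWdef
  have hW_int : Integrable W μ := by
    have h1 : Integrable (fun ω => 2 * f ω * (g ω + k ω)) μ := by
      refine ((hfg.add hfk).const_mul 2).congr ?_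
      refine Filter.Eventually.of_forall fun ω => ?_; simp only [Pi.add_apply, Pi.sub_apply, Pi.mul_apply]; ring
    have h2 : Integrable (fun ω => (g ω + k ω)^2) μ := by
      refine ((hgg.add hgk).add (hgk.add hkk)).congr ?_
      refine Filter.Eventually.of_forall fun ω => ?_; simp only [Pi.add_apply, Pi.sub_apply, Pi.mul_apply]; ring
    exact ((h1.sub (hf_int.const_mul 2)).add (hg_int.add hk_int)).sub h2
  have hsq_int : Integrable (fun ω => (g ω - k ω)^2) μ := by
    refine ((hgg.sub hgk).sub (hgk.sub hkk)).congr ?_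
    refine Filter.Eventually.of_forall fun ω => ?_; simp only [Pi.add_apply, Pi.sub_apply, Pi.mul_apply]; ring
  have hrest_int : Integrable (fun ω =>
      2 * (g ω * g ω - g ω * f ω) + 2 * (k ω * k ω - k ω * f ω)
        + ((f ω - g ω) + (f ω - k ω))) μ :=
    (((hgg.sub hfg).const_mul 2).add ((hkk.sub hfk).const_mul 2)).add
      ((hf_int.sub hg_int).add (hf_int.sub hk_int))
  have hrest_zero : ∫ ω, (2 * (g ω * g ω - g ω * f ω) + 2 * (k ω * k ω - k ω * f ω)
      + ((f ω - g ω) + (f ω - k ω))) ∂μ = 0 := by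
    have i1 : ∫ ω, (g ω * g ω - g ω * f ω) ∂μ
        = (∫ ω, g ω * g ω ∂μ) - ∫ ω, g ω * f ω ∂μ := integral_sub hgg hfg
    have i2 : ∫ ω, (k ω * k ω - k ω * f ω) ∂μ
        = (∫ ω, k ω * k ω ∂μ) - ∫ ω, k ω * f ω ∂μ := integral_sub hkk hfk
    have i3 : ∫ ω, (f ω - g ω) ∂μ = (∫ ω, f ω ∂μ) - ∫ ω, g ω ∂μ := integral_sub hf_int hg_int
    have i4 : ∫ ω, (f ω - k ω) ∂μ = (∫ ω, f ω ∂μ) - ∫ ω, k ω ∂μ := integral_sub hf_int hk_int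
    have i5 : ∫ ω, 2 * (g ω * g ω - g ω * f ω) ∂μ
        = 2 * ∫ ω, (g ω * g ω - g ω * f ω) ∂μ := integral_const_mul 2 _
    have i6 : ∫ ω, 2 * (k ω * k ω - k ω * f ω) ∂μ
        = 2 * ∫ ω, (k ω * k ω - k ω * f ω) ∂μ := integral_const_mul 2 _
    have i7 : ∫ ω, ((f ω - g ω) + (f ω - k ω)) ∂μ
        = (∫ ω, (f ω - g ω) ∂μ) + ∫ ω, (f ω - k ω) ∂μ :=
      integral_add (hf_int.sub hg_int) (hf_int.sub hk_int)
    have i8 : ∫ ω, (2 * (g ω * g ω - g ω * f ω) + 2 * (k ω * k ω - k ω * f ω)) ∂μ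
        = (∫ ω, 2 * (g ω * g ω - g ω * f ω) ∂μ) + ∫ ω, 2 * (k ω * k ω - k ω * f ω) ∂μ :=
      integral_add ((hgg.sub hfg).const_mul 2) ((hkk.sub hfk).const_mul 2)
    have i9 : ∫ ω, (2 * (g ω * g ω - g ω * f ω) + 2 * (k ω * k ω - k ω * f ω)
        + ((f ω - g ω) + (f ω - k ω))) ∂μ
        = (∫ ω, (2 * (g ω * g ω - g ω * f ω) + 2 * (k ω * k ω - k ω * f ω)) ∂μ)
          + ∫ ω, ((f ω - g ω) + (f ω - k ω)) ∂μ :=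
      integral_add (((hgg.sub hfg).const_mul 2).add ((hkk.sub hfk).const_mul 2))
        ((hf_int.sub hg_int).add (hf_int.sub hk_int))
    rw [i9, i8, i7, i5, i6, i1, i2, i3, i4, hgf, hkf, hgint, hkint]
    ring
  have hint_eq : ∫ ω, (g ω - k ω)^2 ∂μ = ∫ ω, W ω ∂μ := by
    have hdecomp : (fun ω => (g ω - k ω)^2) = fun ω =>
        W ω + (2 * (g ω * g ω - g ω * f ω) + 2 * (k ω * k ω - k ω * f ω)
          + ((f ω - g ω) + (f ω - k ω))) := by
      funext ω; simp only [hWdef]; ring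
    rw [hdecomp, integral_add hW_int hrest_int, hrest_zero, add_zero]
  rw [hint_eq]
  have hWle : W ≤ᵐ[μ] fun _ => (1/4 : ℝ) := by
    filter_upwards [hf01, hg0, hg1, hk0, hk1] with ω hf2 hg0 hg1 hk0 hk1
    simp only [hWdef]
    rcases hf2 with hf2 | hf2 <;> rw [hf2] <;>
      nlinarith [sq_nonneg (g ω + k ω - 1/2), sq_nonneg (g ω + k ω - 3/2)]
  calc ∫ ω, W ω ∂μ ≤ ∫ _, (1/4 : ℝ) ∂μ := integral_mono_ae hW_int (integrable_const _) hWle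
    _ = 1/4 := by simp

lemma coherent_bound_core {Ω : Type} {G H : MeasurableSpace Ω} [m0 : MeasurableSpace Ω]
    {μ : Measure Ω} [IsProbabilityMeasure μ] {A : Set Ω} (hA : MeasurableSet A)
    (hG : G ≤ m0) (hH : H ≤ m0) {X Y : Ω → ℝ}
    (hX : X =ᵐ[μ] μ[A.indicator (fun _ => (1 : ℝ)) | G])
    (hY : Y =ᵐ[μ] μ[A.indicator (fun _ => (1 : ℝ)) | H]) :
    ∫ ω, |X ω - Y ω| ^ 2 ∂μ ≤ 1 / 4 := by
  obtain ⟨hg0, hg1, hgf, hgint⟩ := coherent_aux μ hA hG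
  obtain ⟨hk0, hk1, hkf, hkint⟩ := coherent_aux μ hA hH
  have hf_int : Integrable (A.indicator (fun _ => (1:ℝ))) μ :=
    (integrable_const (1:ℝ)).indicator hA
  have hf01 : ∀ᵐ ω ∂μ, A.indicator (fun _ => (1:ℝ)) ω = 0 ∨ A.indicator (fun _ => (1:ℝ)) ω = 1 := by
    refine Filter.Eventually.of_forall fun ω => ?_
    by_cases hh : ω ∈ A
    · right; simp [Set.indicator_of_mem, hh]
    · left; simp [Set.indicator_of_notMem, hh]
  have hcongr : ∫ ω, |X ω - Y ω| ^ 2 ∂μ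
      = ∫ ω, ((μ[A.indicator (fun _ => (1:ℝ)) | G]) ω
          - (μ[A.indicator (fun _ => (1:ℝ)) | H]) ω) ^ 2 ∂μ := by
    refine integral_congr_ae ?_
    filter_upwards [hX, hY] with ω h1 h2
    rw [h1, h2, sq_abs]
  rw [hcongr]
  refine quarter_core hf01 hg0 ?_ hk0 ?_ hf_int integrable_condExp integrable_condExp
    (stronglyMeasurable_condExp.mono hG).aestronglyMeasurable
    (stronglyMeasurable_condExp.mono hH).aestronglyMeasurable hgf hkf hgint hkint
  · exact hg1
  · exact hk1

/-- The extremal example on `Bool`. -/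
lemma quarter_mem : (1/4 : ℝ) ∈ coherentSqVals := by
  classical
  set μ : Measure Bool := (2⁻¹ : ENNReal) • (Measure.dirac true + Measure.dirac false) with hμ
  have hint : ∀ k : Bool → ℝ, ∫ ω, k ω ∂μ = (2⁻¹ : ℝ) * (k true + k false) := by
    intro k
    rw [hμ, integral_smul_measure,
      integral_add_measure .of_finite .of_finite,
      integral_dirac, integral_dirac]
    norm_num
  have hprob : IsProbabilityMeasure μ := by
    constructor
    rw [hμ]
    simp only [Measure.smul_apply, Measure.add_apply, smul_eq_mul]
    rw [Measure.dirac_apply_of_mem (Set.mem_univ _), Measure.dirac_apply_of_mem (Set.mem_univ _)]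
    rw [show (1 : ENNReal) + 1 = 2 from one_add_one_eq_two]
    exact ENNReal.inv_mul_cancel two_ne_zero ENNReal.ofNat_ne_top
  refine ⟨Bool, inferInstance, μ, hprob, ?_⟩
  set A : Set Bool := {true} with hA
  have hAmeas : MeasurableSet A := trivial
  set f : Bool → ℝ := A.indicator (fun _ => (1:ℝ)) with hf
  have hftrue : f true = 1 := by simp [hf, hA]
  have hffalse : f false = 0 := by simp [hf, hA]
  refine ⟨fun _ => (1/2 : ℝ), f,
    ⟨A, ⊥, Bool.instMeasurableSpace, hAmeas, bot_le, le_rfl, ?_, ?_⟩, ?_⟩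
  · rw [condExp_bot]
    have h : ∫ ω, f ω ∂μ = 1/2 := by rw [hint f, hftrue, hffalse]; norm_num
    rw [h]
  · haveI : SigmaFinite (μ.trim (le_rfl : Bool.instMeasurableSpace ≤ Bool.instMeasurableSpace)) :=
      (isFiniteMeasure_trim _).toSigmaFinite
    have hsm : StronglyMeasurable[Bool.instMeasurableSpace] f :=
      stronglyMeasurable_const.indicator hAmeas
    have h := condExp_of_stronglyMeasurable (μ := μ) le_rfl hsm
      ((integrable_const (1:ℝ)).indicator hAmeas)
    rw [h]
  · have hval : ∀ ω, |1/2 - f ω| ^ 2 = (1/4 : ℝ) := by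
      intro ω; cases ω
      · rw [hffalse]; norm_num
      · rw [hftrue]; norm_num
    calc (1/4 : ℝ) = ∫ _ω, (1/4 : ℝ) ∂μ := by
          rw [hint]; norm_num
      _ = ∫ ω, |1/2 - f ω| ^ 2 ∂μ := integral_congr_ae
          (Filter.Eventually.of_forall fun ω => (hval ω).symm)

end Aux

/-- Every coherent pair satisfies `E|X - Y|² ≤ 1/4`, and the supremum of `E|X - Y|²` over all
coherent pairs equals `1/4`. -/
theorem sup_coherent_sq_eq_quarter :
    (∀ (Ω : Type) (m0 : MeasurableSpace Ω) (μ : Measure Ω), IsProbabilityMeasure μ →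
        ∀ X Y : Ω → ℝ, IsCoherentPair μ X Y → ∫ ω, |X ω - Y ω| ^ 2 ∂μ ≤ 1 / 4) ∧
    IsLUB coherentSqVals (1 / 4) := by
  have hub : ∀ (Ω : Type) (m0 : MeasurableSpace Ω) (μ : Measure Ω), IsProbabilityMeasure μ →
      ∀ X Y : Ω → ℝ, IsCoherentPair μ X Y → ∫ ω, |X ω - Y ω| ^ 2 ∂μ ≤ 1 / 4 := by
    intro Ω m0 μ hμ X Y h
    haveI := hμ
    obtain ⟨A, G, H, hA, hG, hH, hX, hY⟩ := h
    exact coherent_bound_core (m0 := m0) (hH _ hA) hG hH hX hY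
  refine ⟨hub, ?_, ?_⟩
  · rintro r ⟨Ω, m0, μ, hμ, X, Y, hcoh, rfl⟩
    exact hub Ω m0 μ hμ X Y hcoh
  · intro b hb
    exact hb quarter_mem
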